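/- arXiv:1005.0142 — 3 statements merged into one kernel-verified Lean document; each statement's English description precedes it below -/
import Mathlib

section
/- Let G be the group with presentation ⟨a, b, c ∣ a² = b² = c² = (abc)² = 1⟩. Then the kernel G⁰ of the homomorphism G → ℤ/2ℤ sending each generator a, b, c to 1 (i.e., the subgroup of elements represented by words of even length in the generators) is a commutative subgroup of G. -/
open FreeGroup

/-- Relators of the group `⟨a, b, c ∣ a² = b² = c² = (abc)² = 1⟩`. -/
def P6rels : Set (FreeGroup (Fin 3)) :=
  {(of 0) ^ 2, (of 1) ^ 2, (of 2) ^ 2, (of 0 * of 1 * of 2) ^ 2}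

/-- The group `G = ⟨a, b, c ∣ a² = b² = c² = (abc)² = 1⟩`. -/
abbrev P6G := PresentedGroup P6rels

/-- The parity homomorphism `G → ℤ/2ℤ` sending each generator to `1`. -/
def parity : P6G →* Multiplicative (ZMod 2) :=
  PresentedGroup.toGroup (f := fun _ => Multiplicative.ofAdd (1 : ZMod 2)) (by
    intro r hr
    rcases hr with rfl | rfl | rfl | rfl <;>
      simp [map_pow, map_mul] <;> decide)

namespace P6aux

noncomputable def A : P6G := PresentedGroup.of 0
noncomputable def B : P6G := PresentedGroup.of 1
noncomputable def C : P6G := PresentedGroup.of 2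

lemma rel_one (r : FreeGroup (Fin 3)) (hr : r ∈ P6rels) :
    PresentedGroup.mk P6rels r = 1 := by
  exact (QuotientGroup.eq_one_iff _).mpr (Subgroup.subset_normalClosure hr)

lemma hA : A * A = 1 := by
  have := rel_one ((of 0) ^ 2) (Or.inl rfl)
  simpa [pow_two, A, PresentedGroup.of] using this

lemma hB : B * B = 1 := by
  have := rel_one ((of 1) ^ 2) (Or.inr (Or.inl rfl))
  simpa [pow_two, B, PresentedGroup.of] using this

lemma hC : C * C = 1 := by
  have := rel_one ((of 2) ^ 2) (Or.inr (Or.inr (Or.inl rfl)))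
  simpa [pow_two, C, PresentedGroup.of] using this

lemma hD : (A * B * C) * (A * B * C) = 1 := by
  have := rel_one ((of 0 * of 1 * of 2) ^ 2) (Or.inr (Or.inr (Or.inr rfl)))
  simpa [pow_two, A, B, C, PresentedGroup.of] using this

lemma Ainv : A⁻¹ = A := inv_eq_of_mul_eq_one_right hA
lemma Binv : B⁻¹ = B := inv_eq_of_mul_eq_one_right hB
lemma Cinv : C⁻¹ = C := inv_eq_of_mul_eq_one_right hC

/-- `CAB = BAC`. -/
lemma hCAB : C * A * B = B * A * C := by
  have h1 : (C * A * B) * (C * A * B) = 1 := by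
    have : (C * A * B) * (C * A * B) = C * ((A * B * C) * (A * B * C)) * C⁻¹ := by
      group
    rw [this, hD, mul_one, mul_inv_cancel]
  have h2 : (C * A * B)⁻¹ = B * A * C := by
    rw [mul_inv_rev, mul_inv_rev, Ainv, Binv, Cinv]; group
  rw [← h2]
  exact (inv_eq_of_mul_eq_one_right h1).symm

noncomputable def u : P6G := A * B
noncomputable def v : P6G := B * C

lemma comm_uv : u * v = v * u := by
  have l1 : u * v = A * C := by
    rw [u, v]
    calc A * B * (B * C) = A * (B * B) * C := by group
    _ = A * C := by rw [hB, mul_one]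
  have l2 : v * u = A * C := by
    rw [v, u]
    calc B * C * (A * B) = B * (C * A * B) := by group
    _ = B * (B * A * C) := by rw [hCAB]
    _ = (B * B) * (A * C) := by group
    _ = A * C := by rw [hB, one_mul]
  rw [l1, l2]

noncomputable def S : Subgroup P6G := Subgroup.closure {u, v}

lemma u_mem : u ∈ S := Subgroup.subset_closure (Or.inl rfl)
lemma v_mem : v ∈ S := Subgroup.subset_closure (Or.inr rfl)

lemma AC_eq : A * C = u * v := by
  rw [u, v]
  calc A * C = A * (B * B) * C := by rw [hB, mul_one]
  _ = A * B * (B * C) := by group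

/-- Conjugation by `A` preserves `S`. -/
lemma conjA {x : P6G} (hx : x ∈ S) : A * x * A ∈ S := by
  induction hx using Subgroup.closure_induction with
  | mem y hy =>
    rcases hy with rfl | rfl
    · -- A * u * A = B * A = u⁻¹
      have : A * u * A = u⁻¹ := by
        rw [u, mul_inv_rev, Ainv, Binv]
        calc A * (A * B) * A = (A * A) * (B * A) := by group
        _ = B * A := by rw [hA, one_mul]
      rw [this]; exact inv_mem u_mem
    · -- A * v * A = A*B*C*A = u * (u*v)⁻¹
      have : A * v * A = u * (u * v)⁻¹ := by
        rw [v]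
        have hCA : C * A = (A * C)⁻¹ := by rw [mul_inv_rev, Ainv, Cinv]
        calc A * (B * C) * A = (A * B) * (C * A) := by group
        _ = u * (A * C)⁻¹ := by rw [hCA, u]
        _ = u * (u * v)⁻¹ := by rw [AC_eq]
      rw [this]
      exact mul_mem u_mem (inv_mem (mul_mem u_mem v_mem))
  | one =>
    have : A * 1 * A = 1 := by rw [mul_one, hA]
    rw [this]; exact S.one_mem
  | mul y z _ _ hy hz =>
    have : A * (y * z) * A = (A * y * A) * (A * z * A) := by
      have h : (A * y * A) * (A * z * A) = A * y * (A * A) * z * A := by group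
      rw [h, hA]; group
    rw [this]; exact mul_mem hy hz
  | inv y _ hy =>
    have : A * y⁻¹ * A = (A * y * A)⁻¹ := by
      rw [show (A * y * A)⁻¹ = A⁻¹ * y⁻¹ * A⁻¹ from by group, Ainv]
    rw [this]; exact inv_mem hy

/-- Every element is in `S` or in the coset `A⁻¹ S` (i.e. `A * g ∈ S`). -/
lemma coset_decomp (g : P6G) : g ∈ S ∨ A * g ∈ S := by
  have hg : g ∈ Subgroup.closure (Set.range (PresentedGroup.of : Fin 3 → P6G)) := by
    rw [PresentedGroup.closure_range_of]; trivial
  induction hg using Subgroup.closure_induction with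
  | mem y hy =>
    right
    obtain ⟨i, rfl⟩ := hy
    fin_cases i
    · show A * A ∈ S; rw [hA]; exact S.one_mem
    · show A * B ∈ S; exact u_mem
    · show A * C ∈ S; rw [AC_eq]; exact mul_mem u_mem v_mem
  | one => left; simpa using S.one_mem
  | mul y z _ _ hy hz =>
    rcases hy with hy | hy <;> rcases hz with hz | hz
    · left; exact mul_mem hy hz
    · right
      have : A * (y * z) = (A * y * A) * (A * z) := by
        have h : (A * y * A) * (A * z) = A * y * (A * A) * z := by group
        rw [h, hA]; group
      rw [this]; exact mul_mem (conjA hy) hz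
    · right
      have : A * (y * z) = (A * y) * z := by group
      rw [this]; exact mul_mem hy hz
    · left
      have : y * z = (A * (A * y) * A) * (A * z) := by
        have h : (A * (A * y) * A) * (A * z) = (A * A) * y * ((A * A) * z) := by group
        rw [h, hA]; group
      rw [this]; exact mul_mem (conjA hy) hz
  | inv y _ hy =>
    rcases hy with hy | hy
    · left; exact inv_mem hy
    · right
      have : A * y⁻¹ = A * (A * y)⁻¹ * A := by group
      rw [this]; exact conjA (inv_mem hy)

lemma parity_A : parity A = Multiplicative.ofAdd (1 : ZMod 2) := by
  exact PresentedGroup.toGroup.of _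

lemma parity_S {x : P6G} (hx : x ∈ S) : parity x = 1 := by
  induction hx using Subgroup.closure_induction with
  | mem y hy =>
    have pB : parity B = Multiplicative.ofAdd (1 : ZMod 2) := PresentedGroup.toGroup.of _
    have pC : parity C = Multiplicative.ofAdd (1 : ZMod 2) := PresentedGroup.toGroup.of _
    rcases hy with rfl | rfl
    · rw [u, _root_.map_mul, parity_A, pB]; decide
    · rw [v, _root_.map_mul, pB, pC]; decide
  | one => exact _root_.map_one parity
  | mul y z _ _ hy hz => rw [_root_.map_mul, hy, hz, mul_one]
  | inv y _ hy => rw [_root_.map_inv, hy, inv_one]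

lemma ker_le_S {x : P6G} (hx : x ∈ parity.ker) : x ∈ S := by
  rcases coset_decomp x with h | h
  · exact h
  · exfalso
    have h1 : parity (A * x) = 1 := parity_S h
    rw [_root_.map_mul, parity_A, MonoidHom.mem_ker.mp hx, mul_one] at h1
    exact absurd h1 (by decide)

lemma S_comm {x : P6G} (hx : x ∈ S) : ∀ y ∈ S, Commute x y := by
  induction hx using Subgroup.closure_induction with
  | mem a ha =>
    intro y hy
    induction hy using Subgroup.closure_induction with
    | mem b hb =>
      rcases ha with rfl | rfl <;> rcases hb with rfl | rfl
      · exact Commute.refl _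
      · exact comm_uv
      · exact comm_uv.symm
      · exact Commute.refl _
    | one => exact Commute.one_right _
    | mul b c _ _ hb hc => exact Commute.mul_right hb hc
    | inv b _ hb => exact Commute.inv_right hb
  | one => intro y _; exact Commute.one_left _
  | mul a b _ _ ha hb => intro y hy; exact Commute.mul_left (ha y hy) (hb y hy)
  | inv a _ ha => intro y hy; exact Commute.inv_left (ha y hy)

end P6aux

/-- The kernel `G⁰` of the length-parity homomorphism is commutative. -/
theorem kernel_parity_commutative :
    ∀ x ∈ parity.ker, ∀ y ∈ parity.ker, x * y = y * x := by
  intro x hx y hy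
  exact P6aux.S_comm (P6aux.ker_le_S hx) y (P6aux.ker_le_S hy)
end

section
/- Let G be a group generated by elements h₀, h₁, h_c satisfying h₀² = h₁² = h_c² = (h₀h₁h_c)² = 1. Then G is virtually commutative: the set of elements expressible as products of an even number of the generators forms a commutative normal subgroup of index at most 2. -/
/-- Let `G` be a group generated by three involutions `h₀, h₁, h_c` whose product is
also an involution (or the identity).  Then `G` is virtually commutative: the set of
elements expressible as products of an even number of the generators forms a
commutative normal subgroup of index at most 2. -/
theorem virtually_commutative_of_three_involutions
    (G : Type*) [Group G] (h₀ h₁ hc : G)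
    (hh₀ : h₀ ^ 2 = 1) (hh₁ : h₁ ^ 2 = 1) (hhc : hc ^ 2 = 1)
    (hprod : (h₀ * h₁ * hc) ^ 2 = 1)
    (hgen : Subgroup.closure {h₀, h₁, hc} = ⊤) :
    ∃ N : Subgroup G,
      (∀ g : G, g ∈ N ↔ ∃ l : List G,
        (∀ x ∈ l, x ∈ ({h₀, h₁, hc} : Set G)) ∧ Even l.length ∧ g = l.prod) ∧
      N.Normal ∧ (∀ x ∈ N, ∀ y ∈ N, x * y = y * x) ∧ N.index ≤ 2 := by
  set S : Set G := {h₀, h₁, hc} with hS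
  have m0 : h₀ * h₀ = 1 := by rwa [pow_two] at hh₀
  have m1 : h₁ * h₁ = 1 := by rwa [pow_two] at hh₁
  have m2 : hc * hc = 1 := by rwa [pow_two] at hhc
  have hinv : ∀ x ∈ S, x⁻¹ = x := by
    rintro x (rfl | rfl | rfl)
    · exact inv_eq_of_mul_eq_one_right m0
    · exact inv_eq_of_mul_eq_one_right m1
    · exact inv_eq_of_mul_eq_one_right m2
  -- reversing a word of involutions inverts the product
  have prod_rev : ∀ l : List G, (∀ x ∈ l, x ∈ S) → (l.prod)⁻¹ = l.reverse.prod := by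
    intro l
    induction l with
    | nil => simp
    | cons x t ih =>
        intro h
        rw [List.prod_cons, mul_inv_rev, ih (fun y hy => h y (List.mem_cons_of_mem _ hy)),
          hinv x (h x (List.mem_cons_self)), List.reverse_cons, List.prod_append,
          List.prod_cons, List.prod_nil, mul_one]
  -- the even-word subgroup
  let N : Subgroup G :=
    { carrier := {g | ∃ l : List G, (∀ x ∈ l, x ∈ S) ∧ Even l.length ∧ g = l.prod}
      one_mem' := ⟨[], by simp⟩
      mul_mem' := by
        rintro a b ⟨l, hl, he, rfl⟩ ⟨m, hm, hf, rfl⟩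
        refine ⟨l ++ m, fun x hx => ?_, ?_, ?_⟩
        · rcases List.mem_append.1 hx with h | h
          · exact hl x h
          · exact hm x h
        · simpa using he.add hf
        · rw [List.prod_append]
      inv_mem' := by
        rintro a ⟨l, hl, he, rfl⟩
        exact ⟨l.reverse, fun x hx => hl x (List.mem_reverse.1 hx), by simpa using he,
          prod_rev l hl⟩ }
  have memN_iff : ∀ g : G, g ∈ N ↔ ∃ l : List G, (∀ x ∈ l, x ∈ S) ∧ Even l.length ∧ g = l.prod :=
    fun g => Iff.rfl
  have hh0S : h₀ ∈ S := by left; rfl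
  -- conjugation by a generator preserves N
  have conj_gen : ∀ x ∈ S, ∀ n ∈ N, x * n * x ∈ N := by
    rintro x hx n ⟨l, hl, he, rfl⟩
    refine ⟨x :: (l ++ [x]), ?_, ?_, ?_⟩
    · intro y hy
      rcases List.mem_cons.1 hy with rfl | hy
      · exact hx
      · rcases List.mem_append.1 hy with h | h
        · exact hl y h
        · have : y = x := by simpa using h
          exact this ▸ hx
    · have hlen : (x :: (l ++ [x])).length = l.length + 2 := by
        simp only [List.length_cons, List.length_append, List.length_nil]
      rw [hlen]
      exact he.add (by decide)
    · simp [List.prod_append, mul_assoc]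
  -- every element is in N or h₀ * it is
  have memN_or : ∀ g : G, g ∈ N ∨ h₀ * g ∈ N := by
    intro g
    have hg : g ∈ Subgroup.closure S := by rw [hgen]; trivial
    induction hg using Subgroup.closure_induction with
    | mem x hx =>
        right
        refine ⟨[h₀, x], ?_, ⟨1, rfl⟩, by simp⟩
        intro y hy
        simp only [List.mem_cons, List.not_mem_nil, or_false] at hy
        rcases hy with rfl | rfl
        · exact hh0S
        · exact hx
    | one => left; exact N.one_mem
    | mul x y hx hy ihx ihy =>
        rcases ihx with hx' | hx' <;> rcases ihy with hy' | hy'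
        · left; exact N.mul_mem hx' hy'
        · right
          have e : (h₀ * x * h₀) * (h₀ * y) = h₀ * (x * y) := by
            rw [mul_assoc (h₀ * x) h₀ (h₀ * y), ← mul_assoc h₀ h₀ y, m0, one_mul, mul_assoc]
          rw [← e]
          exact N.mul_mem (by simpa [mul_assoc] using conj_gen h₀ hh0S x hx') hy'
        · right
          rw [← mul_assoc]
          exact N.mul_mem hx' hy'
        · left
          have e : (h₀ * (h₀ * x) * h₀) * (h₀ * y) = x * y := by
            rw [show h₀ * (h₀ * x) = (h₀ * h₀) * x from (mul_assoc _ _ _).symm, m0, one_mul,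
              mul_assoc x h₀, ← mul_assoc h₀ h₀ y, m0, one_mul]
          rw [← e]
          exact N.mul_mem (conj_gen h₀ hh0S _ hx') hy'
    | inv x hx ihx =>
        rcases ihx with hx' | hx'
        · left; exact N.inv_mem hx'
        · right
          have e : h₀ * (h₀ * x)⁻¹ * h₀ = h₀ * x⁻¹ := by
            rw [mul_inv_rev]
            rw [inv_eq_of_mul_eq_one_right m0]
            rw [mul_assoc, mul_assoc, m0, mul_one]
          rw [← e]
          exact conj_gen h₀ hh0S _ (N.inv_mem hx')
  -- N is normal
  have hNormal : N.Normal := by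
    constructor
    intro n hn g
    rcases memN_or g with hg | hg
    · exact N.mul_mem (N.mul_mem hg hn) (N.inv_mem hg)
    · have hge : g = h₀ * (h₀ * g) := by rw [← mul_assoc, m0, one_mul]
      rw [hge]
      have e2 : h₀ * (h₀ * g) * n * (h₀ * (h₀ * g))⁻¹
          = h₀ * ((h₀ * g) * n * (h₀ * g)⁻¹) * h₀⁻¹ := by group
      rw [e2, inv_eq_of_mul_eq_one_right m0]
      exact conj_gen h₀ hh0S _ (N.mul_mem (N.mul_mem hg hn) (N.inv_mem hg))
  -- key commuting relation
  have rp : h₀ * h₁ * hc * (h₀ * h₁ * hc) = 1 := by rwa [pow_two] at hprod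
  have key : (h₀ * h₁) * (h₁ * hc) = (h₁ * hc) * (h₀ * h₁) := by
    have ab : (h₀ * h₁) * (h₁ * hc) = h₀ * hc := by
      rw [mul_assoc h₀ h₁ (h₁ * hc), ← mul_assoc h₁ h₁ hc, m1, one_mul]
    have e1 : h₀ * ((h₁ * hc) * (h₀ * h₁)) * hc = h₀ * h₁ * hc * (h₀ * h₁ * hc) := by group
    have e2 : h₀ * (h₀ * hc) * hc = 1 := by
      rw [← mul_assoc, m0, one_mul, m2]
    have e3 : h₀ * ((h₁ * hc) * (h₀ * h₁)) * hc = h₀ * (h₀ * hc) * hc := by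
      rw [e1, rp, e2]
    have := mul_left_cancel (mul_right_cancel e3)
    rw [ab, this]
  -- the subgroup generated by the two "translations"
  set K : Subgroup G := Subgroup.closure {h₀ * h₁, h₁ * hc} with hK
  have pair_comm : ∀ s ∈ ({h₀ * h₁, h₁ * hc} : Set G), ∀ t ∈ ({h₀ * h₁, h₁ * hc} : Set G),
      s * t = t * s := by
    rintro s (rfl | rfl) t (rfl | rfl)
    · rfl
    · exact key
    · exact key.symm
    · rfl
  have commK : ∀ x ∈ K, ∀ y ∈ K, x * y = y * x := by
    intro x hx y hy
    have h1 : K ≤ Subgroup.centralizer {h₀ * h₁, h₁ * hc} := by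
      rw [hK]
      apply Subgroup.closure_le _ |>.2
      intro s hs
      rw [SetLike.mem_coe, Subgroup.mem_centralizer_iff]
      intro t ht
      exact pair_comm t ht s hs
    have h2 : K ≤ Subgroup.centralizer {x} := by
      rw [hK]
      apply Subgroup.closure_le _ |>.2
      intro s hs
      rw [SetLike.mem_coe, Subgroup.mem_centralizer_iff]
      intro t ht
      rcases ht with rfl
      exact (Subgroup.mem_centralizer_iff.1 (h1 hx) s hs).symm
    exact Subgroup.mem_centralizer_iff.1 (h2 hy) x rfl
  -- h₀ * (generator) lies in K
  have h0x : ∀ x ∈ S, h₀ * x ∈ K := by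
    rintro x (rfl | rfl | hx)
    · rw [m0]; exact K.one_mem
    · exact Subgroup.subset_closure (by left; rfl)
    · rw [show x = hc from hx]
      have e : h₀ * hc = (h₀ * h₁) * (h₁ * hc) := by
        rw [mul_assoc h₀ h₁ (h₁ * hc), ← mul_assoc h₁ h₁ hc, m1, one_mul]
      rw [e]
      exact K.mul_mem (Subgroup.subset_closure (by left; rfl))
        (Subgroup.subset_closure (by right; rfl))
  -- even words lie in K
  have evenK : ∀ l : List G, (∀ x ∈ l, x ∈ S) →
      (Even l.length → l.prod ∈ K) ∧ (¬ Even l.length → h₀ * l.prod ∈ K) := by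
    intro l
    induction l with
    | nil => exact fun _ => ⟨fun _ => by simpa using K.one_mem, fun h => absurd (by simp) h⟩
    | cons x t ih =>
        intro h
        have hx : x ∈ S := h x (List.mem_cons_self)
        have ih' := ih (fun y hy => h y (List.mem_cons_of_mem _ hy))
        constructor
        · intro he
          have ht : ¬ Even t.length := by
            simp only [List.length_cons, Nat.even_add_one] at he
            exact he
          have hmem := ih'.2 ht
          have e : (x :: t).prod = (h₀ * x)⁻¹ * (h₀ * t.prod) := by
            rw [List.prod_cons, mul_inv_rev, inv_eq_of_mul_eq_one_right m0, hinv x hx,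
              mul_assoc, ← mul_assoc h₀ h₀ t.prod, m0, one_mul]
          rw [e]
          exact K.mul_mem (K.inv_mem (h0x x hx)) hmem
        · intro he
          have ht : Even t.length := by
            simp only [List.length_cons, Nat.even_add_one, not_not] at he
            exact he
          have hmem := ih'.1 ht
          rw [List.prod_cons, ← mul_assoc]
          exact K.mul_mem (h0x x hx) hmem
  have NleK : ∀ g ∈ N, g ∈ K := by
    rintro g ⟨l, hl, he, rfl⟩
    exact (evenK l hl).1 he
  have hcomm : ∀ x ∈ N, ∀ y ∈ N, x * y = y * x :=
    fun x hx y hy => commK x (NleK x hx) y (NleK y hy)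
  -- index ≤ 2
  have hindex : N.index ≤ 2 := by
    by_cases h0N : h₀ ∈ N
    · have : N = ⊤ := by
        rw [Subgroup.eq_top_iff']
        intro g
        rcases memN_or g with hg | hg
        · exact hg
        · have : g = h₀ * (h₀ * g) := by rw [← mul_assoc, m0, one_mul]
          rw [this]
          exact N.mul_mem h0N hg
      rw [this, Subgroup.index_top]
      omega
    · have : N.index = 2 := by
        rw [Subgroup.index_eq_two_iff]
        refine ⟨h₀, fun b => ?_⟩
        rcases memN_or b with hb | hb
        · right
          refine ⟨hb, fun hcon => ?_⟩
          have : h₀ = b⁻¹ * (b * h₀) := by group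
          exact h0N (this ▸ N.mul_mem (N.inv_mem hb) hcon)
        · left
          constructor
          · have e : b * h₀ = b * (h₀ * b) * b⁻¹ := by group
            rw [e]
            exact hNormal.conj_mem _ hb b
          · intro hcon
            have : h₀ = (h₀ * b) * b⁻¹ := by group
            exact h0N (this ▸ N.mul_mem hb (N.inv_mem hcon))
      omega
  exact ⟨N, memN_iff, hNormal, hcomm, hindex⟩
end

section
/- The group G = ⟨a, b, c ∣ a² = b² = c² = (abc)² = 1⟩ has a normal subgroup isomorphic to ℤ² (freely generated by the commuting elements ab and bc) with quotient ℤ/2ℤ; that is, G is isomorphic to a semidirect product ℤ² ⋊ ℤ/2ℤ where the ℤ/2ℤ-action is by negation. -/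
open FreeGroup

/-- The negation automorphism `v ↦ -v` of `ℤ²`, written multiplicatively. -/
def negAut : MulAut (Multiplicative (ℤ × ℤ)) := MulEquiv.inv (Multiplicative (ℤ × ℤ))

/-- The action of `ℤ/2ℤ` on `ℤ²` in which the nontrivial element acts by negation. -/
def negAction : Multiplicative (ZMod 2) →* MulAut (Multiplicative (ℤ × ℤ)) where
  toFun x := if x = 1 then 1 else negAut
  map_one' := if_pos rfl
  map_mul' x y := by
    have hsq : negAut * negAut = 1 := by
      ext v <;> simp [negAut]
    have hcases : ∀ z : Multiplicative (ZMod 2),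
        z = 1 ∨ z = Multiplicative.ofAdd (1 : ZMod 2) := by decide
    rcases hcases x with hx | hx <;> rcases hcases y with hy | hy <;>
      subst hx <;> subst hy <;>
      simp [hsq, (by decide : Multiplicative.ofAdd (1 : ZMod 2) * Multiplicative.ofAdd 1 = 1),
        (by decide : (Multiplicative.ofAdd (1 : ZMod 2)) ≠ 1)]


namespace Scratch

notation "a" => (PresentedGroup.of 0 : P6G)
notation "b" => (PresentedGroup.of 1 : P6G)
notation "c" => (PresentedGroup.of 2 : P6G)

lemma rel_one {r : FreeGroup (Fin 3)} (hr : r ∈ P6rels) : PresentedGroup.mk P6rels r = 1 :=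
  (QuotientGroup.eq_one_iff r).2 (Subgroup.subset_normalClosure hr)

lemma ha : a * a = 1 := by
  have := rel_one (r := (of 0)^2) (Or.inl rfl)
  simpa [sq, PresentedGroup.of] using this

lemma hb : b * b = 1 := by
  have := rel_one (r := (of 1)^2) (Or.inr (Or.inl rfl))
  simpa [sq, PresentedGroup.of] using this

lemma hc : c * c = 1 := by
  have := rel_one (r := (of 2)^2) (Or.inr (Or.inr (Or.inl rfl)))
  simpa [sq, PresentedGroup.of] using this

lemma habc : (a*b*c)*(a*b*c) = 1 := by
  have := rel_one (r := (of 0 * of 1 * of 2)^2) (Or.inr (Or.inr (Or.inr rfl)))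
  simpa [sq, PresentedGroup.of] using this

lemma ha' (g : P6G) : a * (a * g) = g := by rw [← mul_assoc, ha, one_mul]
lemma hb' (g : P6G) : b * (b * g) = g := by rw [← mul_assoc, hb, one_mul]
lemma hc' (g : P6G) : c * (c * g) = g := by rw [← mul_assoc, hc, one_mul]

lemma K : a * b * c = c * b * a := by
  have h1 : (c*b*a) * (a*b*c) = 1 := by
    simp [mul_assoc, ha, hb, hc, ha', hb', hc']
  exact mul_right_cancel (habc.trans h1.symm)

-- bca = acb
lemma hbca : b * (c * a) = a * (c * b) := by
  have := congrArg (fun g => a * g * a) K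
  simpa [mul_assoc, ha, hb, hc, ha', hb', hc'] using this

end Scratch

namespace Scratch

lemma ia : (a)⁻¹ = a := inv_eq_of_mul_eq_one_right ha
lemma ib : (b)⁻¹ = b := inv_eq_of_mul_eq_one_right hb
lemma ic : (c)⁻¹ = c := inv_eq_of_mul_eq_one_right hc

lemma hacba : a * (c * (b * a)) = b * c := by
  have := congrArg (fun g => g * a) hbca.symm
  simpa [mul_assoc, ha, hb, hc, ha', hb', hc'] using this

lemma hcomm : (a*b)*(b*c) = (b*c)*(a*b) := by
  have h1 : (a*b)*(b*c) = a * c := by simp [mul_assoc, hb']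
  have h2 : (b*c)*(a*b) = a * c := by
    have := congrArg (fun g => g * b) hbca
    simpa [mul_assoc, ha, hb, hc, ha', hb', hc'] using this
  rw [h1, h2]

-- conjugation by a inverts x := b*a and y := c*b
lemma conj_x : a * (b * a) * a⁻¹ = (b * a)⁻¹ := by
  rw [ia, mul_inv_rev, ia, ib]
  simp [mul_assoc, ha]
lemma conj_y : a * (c * b) * a⁻¹ = (c * b)⁻¹ := by
  rw [ia, mul_inv_rev, ib, ic]
  simpa [mul_assoc] using hacba

lemma comm_xy : Commute (b*a) (c*b) := by
  have := congrArg (fun g => (b*(a*g))*(a*b)) hcomm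
  -- fallback: direct
  unfold Commute SemiconjBy
  have h1 : (b*a)*(c*b) = b * (a * (c * b)) := by simp [mul_assoc]
  have h2 : (c*b)*(b*a) = c * a := by simp [mul_assoc, hb']
  rw [h1, ← hbca, h2]
  simp [mul_assoc, hb']

end Scratch

namespace Scratch
open SemidirectProduct

abbrev S6 := SemidirectProduct (Multiplicative (ℤ × ℤ)) (Multiplicative (ZMod 2)) negAction

def t : Multiplicative (ZMod 2) := Multiplicative.ofAdd 1

lemma negAction_t : negAction t = negAut := by
  simp only [negAction, MonoidHom.coe_mk, OneHom.coe_mk, if_neg (show t ≠ 1 by decide)]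

def vv : Fin 3 → Multiplicative (ℤ × ℤ)
  | 0 => 1
  | 1 => Multiplicative.ofAdd (1, 0)
  | 2 => Multiplicative.ofAdd (1, 1)

def ff (i : Fin 3) : S6 := ⟨vv i, t⟩

lemma sq_one (n : Multiplicative (ℤ × ℤ)) : (⟨n, t⟩ : S6) * ⟨n, t⟩ = 1 := by
  refine SemidirectProduct.ext ?_ ?_
  · show n * negAction t n = 1
    rw [negAction_t]
    show n * n⁻¹ = 1
    simp
  · show t * t = 1
    decide

lemma ff_rels : ∀ r ∈ P6rels, FreeGroup.lift ff r = 1 := by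
  intro r hr
  have h3 : ff 0 * ff 1 * ff 2 = ⟨Multiplicative.ofAdd (0, 1), t⟩ := by
    ext <;> decide
  rcases hr with rfl | rfl | rfl | rfl <;>
    simp only [map_pow, _root_.map_mul, FreeGroup.lift_apply_of, sq] <;>
    first
      | exact sq_one _
      | (rw [h3]; exact sq_one _)

def phi : P6G →* S6 := PresentedGroup.toGroup ff_rels

lemma phi_of (i : Fin 3) : phi (PresentedGroup.of i) = ff i := PresentedGroup.toGroup.of _

end Scratch

namespace Scratch
open SemidirectProduct

noncomputable def f1 : Multiplicative (ℤ × ℤ) →* P6G where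
  toFun v := (b*a) ^ (v.toAdd.1) * (c*b) ^ (v.toAdd.2)
  map_one' := by simp
  map_mul' u v := by
    show (b*a) ^ (u.toAdd.1 + v.toAdd.1) * (c*b) ^ (u.toAdd.2 + v.toAdd.2)
      = ((b*a) ^ (u.toAdd.1) * (c*b) ^ (u.toAdd.2)) * ((b*a) ^ (v.toAdd.1) * (c*b) ^ (v.toAdd.2))
    rw [zpow_add, zpow_add]
    exact (comm_xy.zpow_zpow _ _).mul_mul_mul_comm _ _

noncomputable def f2 : Multiplicative (ZMod 2) →* P6G :=
  have hcases : ∀ z : Multiplicative (ZMod 2), z = 1 ∨ z = t := by decide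
  { toFun := fun z => if z = 1 then 1 else a
    map_one' := if_pos rfl
    map_mul' := fun u v => by
      rcases hcases u with rfl | rfl <;> rcases hcases v with rfl | rfl <;>
        simp [(by decide : t * t = (1 : Multiplicative (ZMod 2))),
          (by decide : (t : Multiplicative (ZMod 2)) ≠ 1), ha] }

lemma f2_t : f2 t = a := by
  simp [f2, (by decide : (t : Multiplicative (ZMod 2)) ≠ 1)]

lemma f2_one : f2 1 = 1 := map_one f2

lemma compat : ∀ g, f1.comp (negAction g).toMonoidHom
    = (MulAut.conj (f2 g)).toMonoidHom.comp f1 := by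
  have hcases : ∀ z : Multiplicative (ZMod 2), z = 1 ∨ z = t := by decide
  intro g
  rcases hcases g with rfl | rfl
  · ext v
    simp [f2_one]
  · refine MonoidHom.ext fun v => ?_
    rw [negAction_t, f2_t]
    show f1 (negAut v) = a * f1 v * a⁻¹
    show (b*a) ^ ((v⁻¹).toAdd.1) * (c*b) ^ ((v⁻¹).toAdd.2)
        = a * ((b*a) ^ (v.toAdd.1) * (c*b) ^ (v.toAdd.2)) * a⁻¹
    have key : ∀ X : P6G, a * X * a⁻¹ = MulAut.conj a X := fun X => rfl
    have e1 : a * ((b*a) ^ (v.toAdd.1) * (c*b) ^ (v.toAdd.2)) * a⁻¹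
        = (a * (b*a) * a⁻¹) ^ (v.toAdd.1) * (a * (c*b) * a⁻¹) ^ (v.toAdd.2) := by
      simp only [key, _root_.map_mul, _root_.map_zpow]
    rw [e1, conj_x, conj_y, inv_zpow, inv_zpow, ← zpow_neg, ← zpow_neg]
    rfl

noncomputable def psi : S6 →* P6G := SemidirectProduct.lift f1 f2 compat

end Scratch

namespace Scratch
open SemidirectProduct

lemma phi_ba : phi (b * a) = inl (Multiplicative.ofAdd ((1 : ℤ), (0 : ℤ))) := by
  rw [_root_.map_mul, phi_of, phi_of]
  ext <;> decide

lemma phi_cb : phi (c * b) = inl (Multiplicative.ofAdd ((0 : ℤ), (1 : ℤ))) := by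
  rw [_root_.map_mul, phi_of, phi_of]
  ext <;> decide

lemma phi_f1 (v : Multiplicative (ℤ × ℤ)) : phi (f1 v) = inl v := by
  show phi ((b*a) ^ (v.toAdd.1) * (c*b) ^ (v.toAdd.2)) = inl v
  rw [_root_.map_mul, _root_.map_zpow, _root_.map_zpow, phi_ba, phi_cb]
  have step : (inl (Multiplicative.ofAdd ((1:ℤ),(0:ℤ))) : S6) ^ (v.toAdd.1)
      * (inl (Multiplicative.ofAdd ((0:ℤ),(1:ℤ))) : S6) ^ (v.toAdd.2)
      = (inl (Multiplicative.ofAdd ((1:ℤ),(0:ℤ)) ^ (v.toAdd.1)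
          * Multiplicative.ofAdd ((0:ℤ),(1:ℤ)) ^ (v.toAdd.2)) : S6) := by
    rw [_root_.map_mul, _root_.map_zpow, _root_.map_zpow]
  rw [step]
  congr 1
  apply Multiplicative.toAdd.injective
  simp [toAdd_zpow, Prod.ext_iff]

lemma phi_f2 (z : Multiplicative (ZMod 2)) : phi (f2 z) = inr z := by
  have hcases : ∀ w : Multiplicative (ZMod 2), w = 1 ∨ w = t := by decide
  rcases hcases z with rfl | rfl
  · rw [f2_one, _root_.map_one, _root_.map_one]
  · rw [f2_t, phi_of]
    rfl

lemma phi_psi (s : S6) : phi (psi s) = s := by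
  rcases s with ⟨n, z⟩
  rw [mk_eq_inl_mul_inr, _root_.map_mul, _root_.map_mul]
  show phi (psi (inl n)) * phi (psi (inr z)) = _
  rw [show psi (inl n) = f1 n from lift_inl _ _ _ _, show psi (inr z) = f2 z from lift_inr _ _ _ _,
    phi_f1, phi_f2]

lemma psi_phi : ∀ g : P6G, psi (phi g) = g := by
  have hcomp : psi.comp phi = MonoidHom.id P6G := by
    apply PresentedGroup.ext
    intro i
    simp only [MonoidHom.comp_apply, MonoidHom.id_apply, phi_of]
    fin_cases i
    · show psi ⟨vv 0, t⟩ = a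
      rw [mk_eq_inl_mul_inr]
      rw [_root_.map_mul, show psi (inl (vv 0)) = f1 (vv 0) from lift_inl _ _ _ _,
        show psi (inr t) = f2 t from lift_inr _ _ _ _, f2_t]
      show (b*a) ^ ((1:Multiplicative (ℤ×ℤ)).toAdd.1) * (c*b) ^ ((1:Multiplicative (ℤ×ℤ)).toAdd.2) * a = a
      norm_num
    · show psi ⟨vv 1, t⟩ = b
      rw [mk_eq_inl_mul_inr, _root_.map_mul, show psi (inl (vv 1)) = f1 (vv 1) from lift_inl _ _ _ _,
        show psi (inr t) = f2 t from lift_inr _ _ _ _, f2_t]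
      show (b*a) ^ (1:ℤ) * (c*b) ^ (0:ℤ) * a = b
      simp [mul_assoc, ha]
    · show psi ⟨vv 2, t⟩ = c
      rw [mk_eq_inl_mul_inr, _root_.map_mul, show psi (inl (vv 2)) = f1 (vv 2) from lift_inl _ _ _ _,
        show psi (inr t) = f2 t from lift_inr _ _ _ _, f2_t]
      show (b*a) ^ (1:ℤ) * (c*b) ^ (1:ℤ) * a = c
      simp only [zpow_one]
      calc b*a*(c*b)*a = b * (a * (c * (b * a))) := by simp [mul_assoc]
        _ = b * (b * c) := by rw [hacba]
        _ = c := hb' _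
  exact fun g => DFunLike.congr_fun hcomp g

noncomputable def e : P6G ≃* S6 :=
  MulEquiv.ofBijective phi
    ⟨Function.LeftInverse.injective psi_phi, fun s => ⟨psi s, phi_psi s⟩⟩

end Scratch

namespace Scratch
open SemidirectProduct

lemma parity_of (i : Fin 3) : parity (PresentedGroup.of i) = t := PresentedGroup.toGroup.of _

lemma parity_eq : parity = rightHom.comp phi := by
  apply PresentedGroup.ext
  intro i
  rw [MonoidHom.comp_apply, phi_of, parity_of]
  rfl

lemma parity_surj : Function.Surjective parity := by
  intro z
  have hcases : ∀ w : Multiplicative (ZMod 2), w = 1 ∨ w = t := by decide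
  rcases hcases z with rfl | rfl
  · exact ⟨1, map_one _⟩
  · exact ⟨PresentedGroup.of 0, parity_of 0⟩

lemma ker_eq_closure : parity.ker = Subgroup.closure {a * b, b * c} := by
  apply le_antisymm
  · intro x hx
    have hx' : rightHom (phi x) = 1 := by
      rw [← MonoidHom.comp_apply, ← parity_eq]; exact hx
    have hphix : phi x = inl ((phi x).left) := by
      rw [← inl_left_mul_inr_right (phi x)]
      rw [show (phi x).right = 1 from hx']
      simp
    have hxval : x = f1 ((phi x).left) := by
      conv_lhs => rw [← psi_phi x, hphix]
      exact lift_inl _ _ _ _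
    have hba : b * a ∈ Subgroup.closure ({a * b, b * c} : Set P6G) := by
      have : b * a = (a * b)⁻¹ := by rw [mul_inv_rev, ia, ib]
      rw [this]
      exact inv_mem (Subgroup.subset_closure (Set.mem_insert _ _))
    have hcb : c * b ∈ Subgroup.closure ({a * b, b * c} : Set P6G) := by
      have : c * b = (b * c)⁻¹ := by rw [mul_inv_rev, ib, ic]
      rw [this]
      exact inv_mem (Subgroup.subset_closure (Set.mem_insert_of_mem _ rfl))
    rw [hxval]
    exact mul_mem (zpow_mem hba _) (zpow_mem hcb _)
  · rw [Subgroup.closure_le]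
    rintro x (rfl | rfl) <;>
      · show parity _ = 1
        rw [_root_.map_mul, parity_of, parity_of]
        decide

lemma map_ker : Subgroup.map (e : P6G →* S6) parity.ker = (inl : _ →* S6).range := by
  have h1 : (e : P6G →* S6) = phi := rfl
  rw [h1, parity_eq, ← MonoidHom.comap_ker, Subgroup.map_comap_eq_self_of_surjective
    (fun s => ⟨psi s, phi_psi s⟩), range_inl_eq_ker_rightHom]

noncomputable def equivN : parity.ker ≃* Multiplicative (ℤ × ℤ) :=
  ((MulEquiv.subgroupMap e parity.ker).trans (MulEquiv.subgroupCongr map_ker)).trans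
    (MonoidHom.ofInjective (inl_injective (φ := negAction))).symm

noncomputable def equivQ : (P6G ⧸ parity.ker) ≃* Multiplicative (ZMod 2) :=
  QuotientGroup.quotientKerEquivOfSurjective parity parity_surj

end Scratch

/-- `G = ⟨a, b, c ∣ a² = b² = c² = (abc)² = 1⟩` has a normal subgroup isomorphic to
`ℤ²` (generated by the commuting elements `ab` and `bc`) with quotient `ℤ/2ℤ`, and `G`
is isomorphic to the semidirect product `ℤ² ⋊ ℤ/2ℤ` with `ℤ/2ℤ` acting by negation. -/
theorem P6G_iso_semidirect :
    (PresentedGroup.of 0 * PresentedGroup.of 1 : P6G) *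
          (PresentedGroup.of 1 * PresentedGroup.of 2) =
        (PresentedGroup.of 1 * PresentedGroup.of 2) *
          (PresentedGroup.of 0 * PresentedGroup.of 1) ∧
    ∃ (N : Subgroup P6G) (hN : N.Normal),
      N = Subgroup.closure {PresentedGroup.of 0 * PresentedGroup.of 1,
            PresentedGroup.of 1 * PresentedGroup.of 2} ∧
      Nonempty (N ≃* Multiplicative (ℤ × ℤ)) ∧
      Nonempty (letI := hN; ((P6G ⧸ N) ≃* Multiplicative (ZMod 2))) ∧
      Nonempty (P6G ≃* SemidirectProduct (Multiplicative (ℤ × ℤ))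
        (Multiplicative (ZMod 2)) negAction) := by
  exact ⟨Scratch.hcomm, parity.ker, inferInstance, Scratch.ker_eq_closure,
    ⟨Scratch.equivN⟩, ⟨Scratch.equivQ⟩, ⟨Scratch.e⟩⟩
end
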